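/- Fix θ ∈ (0, π) and φ ∈ ℝ. Then the function (θ', φ') ↦ (1 − cos θ · cos θ' − sin θ · sin θ' · cos(φ − φ')) / ((θ − θ')² + sin²θ · (φ − φ')²), defined for (θ', φ') ≠ (θ, φ), tends to 1/2 as (θ', φ') → (θ, φ). -/

import Mathlib

open Filter Topology

lemma sin_lip (a b : ℝ) : |Real.sin a - Real.sin b| ≤ |a - b| := by
  rw [Real.sin_sub_sin]
  have h1 : |Real.sin ((a - b) / 2)| ≤ |(a - b) / 2| := Real.abs_sin_le_abs
  have h2 : |Real.cos ((a + b) / 2)| ≤ 1 := Real.abs_cos_le_one _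
  calc |2 * Real.sin ((a - b) / 2) * Real.cos ((a + b) / 2)|
      = 2 * |Real.sin ((a - b) / 2)| * |Real.cos ((a + b) / 2)| := by
        rw [abs_mul, abs_mul]; simp
    _ ≤ 2 * |(a - b) / 2| * 1 := by
        apply mul_le_mul _ h2 (abs_nonneg _) (by positivity)
        exact mul_le_mul_of_nonneg_left h1 (by norm_num)
    _ = |a - b| := by rw [abs_div, abs_two]; ring

theorem green_kernel_ratio_tendsto_half (θ φ : ℝ) (hθ : θ ∈ Set.Ioo 0 Real.pi) :
    Filter.Tendsto
      (fun p : ℝ × ℝ =>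
        (1 - Real.cos θ * Real.cos p.1 - Real.sin θ * Real.sin p.1 * Real.cos (φ - p.2)) /
          ((θ - p.1) ^ 2 + Real.sin θ ^ 2 * (φ - p.2) ^ 2))
      (𝓝[≠] ((θ, φ) : ℝ × ℝ)) (𝓝 (1 / 2)) := by
  obtain ⟨hθ0, hθπ⟩ := hθ
  have hs : 0 < Real.sin θ := Real.sin_pos_of_pos_of_lt_pi hθ0 hθπ
  set s := Real.sin θ with hsdef
  set f : ℝ × ℝ → ℝ := fun p =>
    (1 - Real.cos θ * Real.cos p.1 - s * Real.sin p.1 * Real.cos (φ - p.2)) /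
      ((θ - p.1) ^ 2 + s ^ 2 * (φ - p.2) ^ 2) with hf
  set B : ℝ × ℝ → ℝ := fun p =>
    5/96 * (θ - p.1)^2 + 5/96 * (φ - p.2)^2 + |θ - p.1| / (2 * s) with hB
  have hBcont : Continuous B := by
    apply Continuous.add
    · fun_prop
    · exact ((continuous_const.sub continuous_fst).abs).div_const _
  have hBtends : Tendsto B (𝓝[≠] ((θ, φ) : ℝ × ℝ)) (𝓝 0) := by
    have h := hBcont.tendsto ((θ, φ) : ℝ × ℝ)
    have hval : B ((θ, φ) : ℝ × ℝ) = 0 := by simp [hB]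
    rw [hval] at h
    exact h.mono_left nhdsWithin_le_nhds
  have hev1 : ∀ᶠ p : ℝ × ℝ in 𝓝 ((θ, φ) : ℝ × ℝ), |θ - p.1| ≤ 1 ∧ |φ - p.2| ≤ 1 := by
    have hc : Continuous fun p : ℝ × ℝ => |θ - p.1| + |φ - p.2| := by fun_prop
    have h := hc.tendsto ((θ, φ) : ℝ × ℝ)
    simp only [sub_self, abs_zero, add_zero] at h
    filter_upwards [h.eventually (gt_mem_nhds one_pos)] with p hp
    constructor
    · linarith [abs_nonneg (φ - p.2)]
    · linarith [abs_nonneg (θ - p.1)]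
  have hev : ∀ᶠ p in 𝓝[≠] ((θ, φ) : ℝ × ℝ), ‖f p - 1/2‖ ≤ B p := by
    filter_upwards [self_mem_nhdsWithin, eventually_nhdsWithin_of_eventually_nhds hev1]
      with p hp hp1
    obtain ⟨hu1, hv1⟩ := hp1
    set u : ℝ := θ - p.1 with hu
    set v : ℝ := φ - p.2 with hv
    have hD : 0 < u ^ 2 + s ^ 2 * v ^ 2 := by
      have hp' : p ≠ ((θ, φ) : ℝ × ℝ) := hp
      rcases not_and_or.mp (fun h : p.1 = θ ∧ p.2 = φ => hp' (Prod.ext h.1 h.2)) with h | h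
      · have hu0 : u ≠ 0 := sub_ne_zero.mpr (Ne.symm h)
        positivity
      · have hv0 : v ≠ 0 := sub_ne_zero.mpr (Ne.symm h)
        positivity
    have hid : f p - 1/2 =
        ((1 - Real.cos u - u^2/2) + s^2 * (1 - Real.cos v - v^2/2)
          + s * (Real.sin p.1 - s) * (1 - Real.cos v)) / (u^2 + s^2 * v^2) := by
      have hN : 1 - Real.cos θ * Real.cos p.1 - s * Real.sin p.1 * Real.cos (φ - p.2)
          = (1 - Real.cos u) + (1 - Real.cos v) * (s * Real.sin p.1) := by
        rw [hu, hv, Real.cos_sub θ p.1, hsdef]; ring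
      rw [hf]
      simp only
      rw [hN]
      rw [← hu, ← hv]
      field_simp
      ring
    rw [Real.norm_eq_abs, hid, abs_div, abs_of_pos hD, div_le_iff₀ hD]
    have hE1 : |1 - Real.cos u - u^2/2| ≤ u^2 * u^2 * (5/96) := by
      have h := Real.cos_bound hu1
      have h4 : |u| ^ 4 = u^2 * u^2 := by
        rw [← abs_pow]
        rw [abs_of_nonneg (by positivity)]
        ring
      rw [h4] at h
      calc |1 - Real.cos u - u^2/2| = |Real.cos u - (1 - u^2/2)| := by rw [abs_sub_comm]; ring_nf
        _ ≤ u^2 * u^2 * (5/96) := h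
    have hE2 : |1 - Real.cos v - v^2/2| ≤ v^2 * v^2 * (5/96) := by
      have h := Real.cos_bound hv1
      have h4 : |v| ^ 4 = v^2 * v^2 := by
        rw [← abs_pow]
        rw [abs_of_nonneg (by positivity)]
        ring
      rw [h4] at h
      calc |1 - Real.cos v - v^2/2| = |Real.cos v - (1 - v^2/2)| := by rw [abs_sub_comm]; ring_nf
        _ ≤ v^2 * v^2 * (5/96) := h
    have hcv0 : 0 ≤ 1 - Real.cos v := by linarith [Real.cos_le_one v]
    have hcv2 : 1 - Real.cos v ≤ v^2/2 := by linarith [Real.one_sub_sq_div_two_le_cos (x := v)]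
    have hsin : |Real.sin p.1 - s| ≤ |u| := by
      rw [hsdef, hu, abs_sub_comm θ p.1]
      exact sin_lip p.1 θ
    have hE3 : |s * (Real.sin p.1 - s) * (1 - Real.cos v)| ≤ s * |u| * (v^2/2) := by
      rw [abs_mul, abs_mul, abs_of_pos hs, abs_of_nonneg hcv0]
      gcongr
    calc |(1 - Real.cos u - u^2/2) + s^2 * (1 - Real.cos v - v^2/2)
          + s * (Real.sin p.1 - s) * (1 - Real.cos v)|
        ≤ |1 - Real.cos u - u^2/2| + s^2 * |1 - Real.cos v - v^2/2|
          + |s * (Real.sin p.1 - s) * (1 - Real.cos v)| := by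
          refine (abs_add_le _ _).trans ?_
          gcongr
          refine (abs_add_le _ _).trans ?_
          gcongr
          rw [abs_mul, abs_of_nonneg (by positivity : (0:ℝ) ≤ s^2)]
      _ ≤ u^2 * u^2 * (5/96) + s^2 * (v^2 * v^2 * (5/96)) + s * |u| * (v^2/2) := by
          gcongr
      _ ≤ B p * (u^2 + s^2 * v^2) := by
          have hkey : B p * (u^2 + s^2 * v^2)
              - (u^2 * u^2 * (5/96) + s^2 * (v^2 * v^2 * (5/96)) + s * |u| * (v^2/2))
              = 5/96 * u^2 * s^2 * v^2 + 5/96 * v^2 * u^2 + |u| * u^2 / (2*s) := by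
            rw [hB]
            field_simp
            ring
          have h1 : (0:ℝ) ≤ 5/96 * u^2 * s^2 * v^2 := by positivity
          have h2 : (0:ℝ) ≤ 5/96 * v^2 * u^2 := by positivity
          have h3 : (0:ℝ) ≤ |u| * u^2 / (2*s) := by positivity
          linarith
  have h0 : Tendsto (fun p => f p - 1/2) (𝓝[≠] ((θ, φ) : ℝ × ℝ)) (𝓝 0) :=
    squeeze_zero_norm' hev hBtends
  have h1 := h0.add_const (1/2 : ℝ)
  simpa using h1
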